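/- Let X ∈ ℝ^{n×d} have rows x_1ᵀ, …, x_nᵀ with ‖x_i‖₂ = 1 for all i, let β*, β ∈ ℝ^d, let y ∈ ℝ^n, and set ε = y − Xβ*. For 1 ≤ k ≤ n define ψ⁻(k) = min_{T: |T|=k} λ_min(Σ_{i∈T} x_i x_iᵀ) and ψ⁺(k) = max_{T: |T|=k} λ_max(Σ_{i∈T} x_i x_iᵀ). Let 1 ≤ m ≤ n with ψ⁻(m) > 0, and let S ⊆ {1,…,n} with |S| = m satisfy (y_i − x_iᵀβ)² ≤ (y_j − x_jᵀβ)² for every i ∈ S and j ∉ S. Let β' = (X_Sᵀ X_S)^{-1} X_Sᵀ y_S be the least squares estimate on S. Then for any subset S* ⊆ {1,…,n} with |S*| = m: ‖β' − β*‖₂ ≤ (2·ψ⁺(|S \ S*|)/ψ⁻(m))·‖β − β*‖₂ + (Σ_{i∈S*} |ε_i|)/ψ⁻(m). -/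

import Mathlib

set_option autoImplicit false

open Finset
open RealInnerProductSpace

/-- The largest eigenvalue of a matrix. -/
noncomputable def lambdaMax {d : ℕ} (M : Matrix (Fin d) (Fin d) ℝ) : ℝ :=
  sSup {r : ℝ | ∃ v : Fin d → ℝ, v ≠ 0 ∧ M.mulVec v = r • v}

/-- The smallest eigenvalue of a matrix. -/
noncomputable def lambdaMin {d : ℕ} (M : Matrix (Fin d) (Fin d) ℝ) : ℝ :=
  sInf {r : ℝ | ∃ v : Fin d → ℝ, v ≠ 0 ∧ M.mulVec v = r • v}

/-- The Gram matrix `∑_{i ∈ S} x_i x_iᵀ` of a subset of the sample points. -/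
noncomputable def gramMatrix {n d : ℕ} (x : Fin n → EuclideanSpace ℝ (Fin d))
    (S : Finset (Fin n)) : Matrix (Fin d) (Fin d) ℝ :=
  ∑ i ∈ S, Matrix.of fun j k => x i j * x i k

/-- `ψ⁺(k)`: the maximum over all size-`k` subsets `T` of the largest eigenvalue
of `∑_{i ∈ T} x_i x_iᵀ`. -/
noncomputable def psiPlus {n d : ℕ} (x : Fin n → EuclideanSpace ℝ (Fin d)) (k : ℕ) : ℝ :=
  sSup {r : ℝ | ∃ T : Finset (Fin n), T.card = k ∧ r = lambdaMax (gramMatrix x T)}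

/-- `ψ⁻(k)`: the minimum over all size-`k` subsets `T` of the smallest eigenvalue
of `∑_{i ∈ T} x_i x_iᵀ`. -/
noncomputable def psiMinus {n d : ℕ} (x : Fin n → EuclideanSpace ℝ (Fin d)) (k : ℕ) : ℝ :=
  sInf {r : ℝ | ∃ T : Finset (Fin n), T.card = k ∧ r = lambdaMin (gramMatrix x T)}

section eig
variable {d : ℕ} (M : Matrix (Fin d) (Fin d) ℝ)

-- the eigenvalue set is bounded
lemma eig_bdd : ∀ r ∈ {r : ℝ | ∃ v : Fin d → ℝ, v ≠ 0 ∧ M.mulVec v = r • v},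
    |r| ≤ ‖LinearMap.toContinuousLinearMap (Matrix.toEuclideanLin M)‖ := by
  rintro r ⟨v, hv, hMv⟩
  set T := LinearMap.toContinuousLinearMap (Matrix.toEuclideanLin M)
  set vE : EuclideanSpace ℝ (Fin d) := (WithLp.equiv 2 (Fin d → ℝ)).symm v
  have hvE : vE ≠ 0 := by
    simpa [vE] using hv
  have hTv : T vE = r • vE := by
    show Matrix.toEuclideanLin M vE = r • vE
    exact congrArg (WithLp.toLp 2) hMv
  have h1 : ‖T vE‖ = |r| * ‖vE‖ := by rw [hTv, norm_smul, Real.norm_eq_abs]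
  have h2 : ‖T vE‖ ≤ ‖T‖ * ‖vE‖ := T.le_opNorm vE
  have h3 : (0:ℝ) < ‖vE‖ := norm_pos_iff.mpr hvE
  nlinarith [h1, h2, h3]
end eig

section ray
variable {d : ℕ} {M : Matrix (Fin d) (Fin d) ℝ}

lemma quad_le_lambdaMax (hd : 0 < d) (hM : M.IsHermitian) (v : EuclideanSpace ℝ (Fin d)) :
    ⟪(Matrix.toEuclideanLin M) v, v⟫ ≤ lambdaMax M * ‖v‖ ^ 2 := by
  haveI : Nonempty (Fin d) := ⟨⟨0, hd⟩⟩
  haveI : Nontrivial (EuclideanSpace ℝ (Fin d)) := by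
    refine nontrivial_of_ne (EuclideanSpace.single ⟨0, hd⟩ (1:ℝ)) 0 ?_
    intro h
    have := congrFun (congrArg (fun z : EuclideanSpace ℝ (Fin d) => (z : Fin d → ℝ)) h) ⟨0, hd⟩
    simp [EuclideanSpace.single_apply] at this
  set T := Matrix.toEuclideanLin M with hT
  have hsym : T.IsSymmetric := (Matrix.isHermitian_iff_isSymmetric).mp hM
  set μ : ℝ := ⨆ x : { x : EuclideanSpace ℝ (Fin d) // x ≠ 0 },
      RCLike.re ⟪T x, (x : EuclideanSpace ℝ (Fin d))⟫ / ‖(x : EuclideanSpace ℝ (Fin d))‖ ^ 2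
    with hμ
  have heig : Module.End.HasEigenvalue T μ := by
    exact hsym.hasEigenvalue_iSup_of_finiteDimensional
  obtain ⟨w, hw⟩ := heig.exists_hasEigenvector
  have hμmem : μ ∈ {r : ℝ | ∃ v : Fin d → ℝ, v ≠ 0 ∧ M.mulVec v = r • v} := by
    refine ⟨WithLp.equiv 2 (Fin d → ℝ) w, ?_, ?_⟩
    · simpa using hw.right
    · exact congrArg WithLp.ofLp hw.apply_eq_smul
  have hbdd : BddAbove {r : ℝ | ∃ v : Fin d → ℝ, v ≠ 0 ∧ M.mulVec v = r • v} := by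
    refine ⟨‖LinearMap.toContinuousLinearMap (Matrix.toEuclideanLin M)‖, fun r hr => ?_⟩
    exact (abs_le.mp (eig_bdd M r hr)).2
  have hμle : μ ≤ lambdaMax M := le_csSup hbdd hμmem
  rcases eq_or_ne v 0 with rfl | hv
  · simp
  · have hray : RCLike.re ⟪T v, v⟫ / ‖v‖ ^ 2 ≤ μ := by
      have hb : BddAbove (Set.range fun x : { x : EuclideanSpace ℝ (Fin d) // x ≠ 0 } =>
          RCLike.re ⟪T x, (x : EuclideanSpace ℝ (Fin d))⟫ / ‖(x : EuclideanSpace ℝ (Fin d))‖ ^ 2) := by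
        set C := ‖LinearMap.toContinuousLinearMap T‖
        refine ⟨C, ?_⟩
        rintro r ⟨x, rfl⟩
        have hx : (0:ℝ) < ‖(x : EuclideanSpace ℝ (Fin d))‖ ^ 2 := by
          have := norm_pos_iff.mpr x.prop
          positivity
        rw [div_le_iff₀ hx]
        have h1 : |⟪T x, (x : EuclideanSpace ℝ (Fin d))⟫| ≤ ‖T (x : EuclideanSpace ℝ (Fin d))‖ * ‖(x : EuclideanSpace ℝ (Fin d))‖ :=
          abs_real_inner_le_norm _ _
        have h2 : ‖T (x : EuclideanSpace ℝ (Fin d))‖ ≤ C * ‖(x : EuclideanSpace ℝ (Fin d))‖ :=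
          (LinearMap.toContinuousLinearMap T).le_opNorm _
        have h3 : (0:ℝ) ≤ ‖(x : EuclideanSpace ℝ (Fin d))‖ := norm_nonneg _
        calc RCLike.re ⟪T x, (x : EuclideanSpace ℝ (Fin d))⟫
            ≤ |⟪T x, (x : EuclideanSpace ℝ (Fin d))⟫| := le_abs_self _
          _ ≤ C * ‖(x : EuclideanSpace ℝ (Fin d))‖ ^ 2 := by nlinarith
      exact le_ciSup hb (⟨v, hv⟩ : { x : EuclideanSpace ℝ (Fin d) // x ≠ 0 })
    have hv2 : (0:ℝ) < ‖v‖ ^ 2 := by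
      have := norm_pos_iff.mpr hv
      positivity
    have : RCLike.re ⟪T v, v⟫ ≤ μ * ‖v‖ ^ 2 := by
      rw [div_le_iff₀ hv2] at hray; exact hray
    calc ⟪T v, v⟫ = RCLike.re ⟪T v, v⟫ := rfl
      _ ≤ μ * ‖v‖ ^ 2 := this
      _ ≤ lambdaMax M * ‖v‖ ^ 2 := by nlinarith

lemma lambdaMin_le_quad (hd : 0 < d) (hM : M.IsHermitian) (v : EuclideanSpace ℝ (Fin d)) :
    lambdaMin M * ‖v‖ ^ 2 ≤ ⟪(Matrix.toEuclideanLin M) v, v⟫ := by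
  haveI : Nonempty (Fin d) := ⟨⟨0, hd⟩⟩
  haveI : Nontrivial (EuclideanSpace ℝ (Fin d)) := by
    refine nontrivial_of_ne (EuclideanSpace.single ⟨0, hd⟩ (1:ℝ)) 0 ?_
    intro h
    have := congrFun (congrArg (fun z : EuclideanSpace ℝ (Fin d) => (z : Fin d → ℝ)) h) ⟨0, hd⟩
    simp [EuclideanSpace.single_apply] at this
  set T := Matrix.toEuclideanLin M with hT
  have hsym : T.IsSymmetric := (Matrix.isHermitian_iff_isSymmetric).mp hM
  set μ : ℝ := ⨅ x : { x : EuclideanSpace ℝ (Fin d) // x ≠ 0 },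
      RCLike.re ⟪T x, (x : EuclideanSpace ℝ (Fin d))⟫ / ‖(x : EuclideanSpace ℝ (Fin d))‖ ^ 2
    with hμ
  have heig : Module.End.HasEigenvalue T μ := by
    exact hsym.hasEigenvalue_iInf_of_finiteDimensional
  obtain ⟨w, hw⟩ := heig.exists_hasEigenvector
  have hμmem : μ ∈ {r : ℝ | ∃ v : Fin d → ℝ, v ≠ 0 ∧ M.mulVec v = r • v} := by
    refine ⟨WithLp.equiv 2 (Fin d → ℝ) w, ?_, ?_⟩
    · simpa using hw.right
    · exact congrArg WithLp.ofLp hw.apply_eq_smul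
  have hbdd : BddBelow {r : ℝ | ∃ v : Fin d → ℝ, v ≠ 0 ∧ M.mulVec v = r • v} := by
    refine ⟨-‖LinearMap.toContinuousLinearMap (Matrix.toEuclideanLin M)‖, fun r hr => ?_⟩
    exact (abs_le.mp (eig_bdd M r hr)).1
  have hμle : lambdaMin M ≤ μ := csInf_le hbdd hμmem
  rcases eq_or_ne v 0 with rfl | hv
  · simp
  · have hray : μ ≤ RCLike.re ⟪T v, v⟫ / ‖v‖ ^ 2 := by
      have hb : BddBelow (Set.range fun x : { x : EuclideanSpace ℝ (Fin d) // x ≠ 0 } =>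
          RCLike.re ⟪T x, (x : EuclideanSpace ℝ (Fin d))⟫ / ‖(x : EuclideanSpace ℝ (Fin d))‖ ^ 2) := by
        set C := ‖LinearMap.toContinuousLinearMap T‖
        refine ⟨-C, ?_⟩
        rintro r ⟨x, rfl⟩
        have hx : (0:ℝ) < ‖(x : EuclideanSpace ℝ (Fin d))‖ ^ 2 := by
          have := norm_pos_iff.mpr x.prop
          positivity
        rw [le_div_iff₀ hx]
        have h1 : |⟪T x, (x : EuclideanSpace ℝ (Fin d))⟫| ≤ ‖T (x : EuclideanSpace ℝ (Fin d))‖ * ‖(x : EuclideanSpace ℝ (Fin d))‖ :=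
          abs_real_inner_le_norm _ _
        have h2 : ‖T (x : EuclideanSpace ℝ (Fin d))‖ ≤ C * ‖(x : EuclideanSpace ℝ (Fin d))‖ :=
          (LinearMap.toContinuousLinearMap T).le_opNorm _
        have h3 : (0:ℝ) ≤ ‖(x : EuclideanSpace ℝ (Fin d))‖ := norm_nonneg _
        have h4 : -(C * ‖(x : EuclideanSpace ℝ (Fin d))‖ ^ 2) ≤ RCLike.re ⟪T x, (x : EuclideanSpace ℝ (Fin d))⟫ := by
          have := neg_abs_le (⟪T x, (x : EuclideanSpace ℝ (Fin d))⟫ : ℝ)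
          have : -(C * ‖(x : EuclideanSpace ℝ (Fin d))‖ ^ 2) ≤ -|⟪T x, (x : EuclideanSpace ℝ (Fin d))⟫| := by nlinarith
          calc -(C * ‖(x : EuclideanSpace ℝ (Fin d))‖ ^ 2) ≤ -|(⟪T x, (x : EuclideanSpace ℝ (Fin d))⟫ : ℝ)| := this
            _ ≤ (⟪T x, (x : EuclideanSpace ℝ (Fin d))⟫ : ℝ) := neg_abs_le _
        linarith
      exact ciInf_le hb (⟨v, hv⟩ : { x : EuclideanSpace ℝ (Fin d) // x ≠ 0 })
    have hv2 : (0:ℝ) < ‖v‖ ^ 2 := by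
      have := norm_pos_iff.mpr hv
      positivity
    have hq : μ * ‖v‖ ^ 2 ≤ RCLike.re ⟪T v, v⟫ := by
      rw [le_div_iff₀ hv2] at hray; exact hray
    calc lambdaMin M * ‖v‖ ^ 2 ≤ μ * ‖v‖ ^ 2 := by nlinarith
      _ ≤ RCLike.re ⟪T v, v⟫ := hq
      _ = ⟪T v, v⟫ := rfl

end ray

section gram
variable {n d : ℕ} (x : Fin n → EuclideanSpace ℝ (Fin d))

lemma gram_isHermitian (T : Finset (Fin n)) : (gramMatrix x T).IsHermitian := by
  unfold Matrix.IsHermitian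
  ext j k
  simp [gramMatrix, Matrix.sum_apply, Matrix.conjTranspose_apply, mul_comm]

lemma gram_mulVec (T : Finset (Fin n)) (v : Fin d → ℝ) (j : Fin d) :
    (gramMatrix x T).mulVec v j = ∑ i ∈ T, (∑ k, x i k * v k) * x i j := by
  simp only [Matrix.mulVec, dotProduct, gramMatrix, Matrix.sum_apply, Matrix.of_apply,
    Finset.sum_mul, Finset.mul_sum]
  rw [Finset.sum_comm]
  exact Finset.sum_congr rfl fun i _ => Finset.sum_congr rfl fun k _ => by ring

lemma gram_quad (T : Finset (Fin n)) (v : EuclideanSpace ℝ (Fin d)) :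
    ⟪(Matrix.toEuclideanLin (gramMatrix x T)) v, v⟫ = ∑ i ∈ T, (∑ j, x i j * v j) ^ 2 := by
  have h0 : ⟪(Matrix.toEuclideanLin (gramMatrix x T)) v, v⟫
      = ∑ j, ((gramMatrix x T).mulVec (WithLp.equiv 2 (Fin d → ℝ) v) j) * v j := by
    simp [PiLp.inner_apply, RCLike.inner_apply, Matrix.toEuclideanLin_apply, mul_comm]
  rw [h0]
  have h1 : ∀ j, ((gramMatrix x T).mulVec (WithLp.equiv 2 (Fin d → ℝ) v) j) * v j
      = ∑ i ∈ T, ((∑ k, x i k * v k) * x i j) * v j := by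
    intro j; rw [gram_mulVec, Finset.sum_mul]; rfl
  simp only [h1]
  rw [Finset.sum_comm]
  refine Finset.sum_congr rfl fun i _ => ?_
  rw [pow_two]
  simp only [mul_assoc, ← Finset.mul_sum]

lemma psi_set_finite_max (k : ℕ) :
    {r : ℝ | ∃ T : Finset (Fin n), T.card = k ∧ r = lambdaMax (gramMatrix x T)}.Finite :=
  Set.Finite.subset (Set.finite_range fun T : Finset (Fin n) => lambdaMax (gramMatrix x T))
    (by rintro r ⟨T, -, rfl⟩; exact ⟨T, rfl⟩)

lemma psi_set_finite_min (k : ℕ) :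
    {r : ℝ | ∃ T : Finset (Fin n), T.card = k ∧ r = lambdaMin (gramMatrix x T)}.Finite :=
  Set.Finite.subset (Set.finite_range fun T : Finset (Fin n) => lambdaMin (gramMatrix x T))
    (by rintro r ⟨T, -, rfl⟩; exact ⟨T, rfl⟩)

lemma sum_inner_sq_le (hd : 0 < d) (T : Finset (Fin n)) (v : EuclideanSpace ℝ (Fin d)) :
    ∑ i ∈ T, (∑ j, x i j * v j) ^ 2 ≤ psiPlus x T.card * ‖v‖ ^ 2 := by
  have h1 := quad_le_lambdaMax hd (gram_isHermitian x T) v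
  rw [gram_quad] at h1
  refine h1.trans ?_
  have h2 : lambdaMax (gramMatrix x T) ≤ psiPlus x T.card :=
    le_csSup (psi_set_finite_max x T.card).bddAbove ⟨T, rfl, rfl⟩
  nlinarith [sq_nonneg ‖v‖]

lemma psiMinus_le_sum_inner_sq (hd : 0 < d) (T : Finset (Fin n)) (v : EuclideanSpace ℝ (Fin d)) :
    psiMinus x T.card * ‖v‖ ^ 2 ≤ ∑ i ∈ T, (∑ j, x i j * v j) ^ 2 := by
  have h1 := lambdaMin_le_quad hd (gram_isHermitian x T) v
  rw [gram_quad] at h1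
  refine le_trans ?_ h1
  have h2 : psiMinus x T.card ≤ lambdaMin (gramMatrix x T) :=
    csInf_le (psi_set_finite_min x T.card).bddBelow ⟨T, rfl, rfl⟩
  nlinarith [sq_nonneg ‖v‖]

end gram

lemma psiMinus_dzero {n m : ℕ} (x : Fin n → EuclideanSpace ℝ (Fin 0)) (hmn : m ≤ n) :
    psiMinus x m = 0 := by
  have hlam : ∀ T : Finset (Fin n), lambdaMin (gramMatrix x T) = 0 := by
    intro T
    have : {r : ℝ | ∃ v : Fin 0 → ℝ, v ≠ 0 ∧ (gramMatrix x T).mulVec v = r • v} = ∅ := by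
      ext r
      simp only [Set.mem_setOf_eq, Set.mem_empty_iff_false, iff_false, not_exists]
      intro v ⟨hv, _⟩
      exact (hv (Subsingleton.elim v 0)).elim
    rw [lambdaMin, this, Real.sInf_empty]
  obtain ⟨T, -, hT⟩ := Finset.exists_subset_card_eq (s := (Finset.univ : Finset (Fin n))) (n := m)
    (by simpa using hmn)
  have : {r : ℝ | ∃ T : Finset (Fin n), T.card = m ∧ r = lambdaMin (gramMatrix x T)} = {0} := by
    ext r
    constructor
    · rintro ⟨U, -, rfl⟩; exact hlam U
    · rintro rfl; exact ⟨T, hT, (hlam T).symm⟩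
  rw [psiMinus, this, csInf_singleton]

section main
variable {n d : ℕ}

lemma abs_sum_le (u v : EuclideanSpace ℝ (Fin d)) : |∑ j, u j * v j| ≤ ‖u‖ * ‖v‖ := by
  have h : ∑ j, u j * v j = ⟪u, v⟫ := by
    simp [PiLp.inner_apply, RCLike.inner_apply, conj_trivial, mul_comm]
  rw [h]
  exact abs_real_inner_le_norm u v

lemma psiPlus_nonneg (hd : 0 < d) (x : Fin n → EuclideanSpace ℝ (Fin d)) (k : ℕ) (hk : k ≤ n) :
    0 ≤ psiPlus x k := by
  obtain ⟨T, -, hT⟩ := Finset.exists_subset_card_eq (s := (Finset.univ : Finset (Fin n))) (n := k) (by simpa using hk)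
  have h := sum_inner_sq_le x hd T (EuclideanSpace.single ⟨0, hd⟩ (1:ℝ))
  rw [hT] at h
  have h0 : (0:ℝ) ≤ ∑ i ∈ T, (∑ j, x i j * (EuclideanSpace.single ⟨0, hd⟩ (1:ℝ)) j) ^ 2 :=
    Finset.sum_nonneg fun i _ => sq_nonneg _
  have hn : ‖EuclideanSpace.single (⟨0, hd⟩ : Fin d) (1:ℝ)‖ = 1 := by
    rw [EuclideanSpace.norm_single]; norm_num
  rw [hn] at h
  nlinarith

lemma sqrt_bound {A B P nΔ nδ : ℝ} (hA : 0 ≤ A) (hB : 0 ≤ B) (hP : 0 ≤ P)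
    (hΔ : 0 ≤ nΔ) (hδ : 0 ≤ nδ) (h1 : A ≤ P * nΔ ^ 2) (h2 : B ≤ P * nδ ^ 2) :
    Real.sqrt A * Real.sqrt B ≤ P * nΔ * nδ := by
  have h3 : Real.sqrt A ≤ Real.sqrt (P * nΔ ^ 2) := Real.sqrt_le_sqrt h1
  have h4 : Real.sqrt B ≤ Real.sqrt (P * nδ ^ 2) := Real.sqrt_le_sqrt h2
  have h5 : Real.sqrt A * Real.sqrt B ≤ Real.sqrt (P * nΔ ^ 2) * Real.sqrt (P * nδ ^ 2) := by
    have := Real.sqrt_nonneg A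
    have := Real.sqrt_nonneg (P * nδ ^ 2)
    nlinarith [Real.sqrt_nonneg B, Real.sqrt_nonneg (P * nΔ ^ 2)]
  refine h5.trans ?_
  rw [← Real.sqrt_mul (by positivity)]
  have : P * nΔ ^ 2 * (P * nδ ^ 2) = (P * nΔ * nδ) ^ 2 := by ring
  rw [this, Real.sqrt_sq (by positivity)]

lemma Tpart (hd : 0 < d) (x : Fin n → EuclideanSpace ℝ (Fin d)) (hx : ∀ i, ‖x i‖ = 1)
    (β βstar : EuclideanSpace ℝ (Fin d)) (y ε : Fin n → ℝ)
    (hε : ∀ i, ε i = y i - ∑ j, x i j * βstar j)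
    (S Sstar : Finset (Fin n)) (hcards : S.card = Sstar.card)
    (hsel : ∀ i ∈ S, ∀ j ∉ S,
      (y i - ∑ l, x i l * β l) ^ 2 ≤ (y j - ∑ l, x j l * β l) ^ 2)
    (δ : EuclideanSpace ℝ (Fin d)) :
    ∑ i ∈ S \ Sstar, ε i * (∑ j, x i j * δ j)
      ≤ (∑ i ∈ Sstar \ S, |ε i|) * ‖δ‖
        + 2 * psiPlus x (S \ Sstar).card * ‖β - βstar‖ * ‖δ‖ := by
  classical
  set T := S \ Sstar with hT
  set T' := Sstar \ S with hT'
  set Δ : EuclideanSpace ℝ (Fin d) := β - βstar with hΔ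
  set a : Fin n → ℝ := fun i => ∑ j, x i j * δ j with ha
  set b : Fin n → ℝ := fun i => ∑ j, x i j * Δ j with hb
  set r : Fin n → ℝ := fun i => y i - ∑ l, x i l * β l with hr
  set P : ℝ := psiPlus x T.card with hP
  -- basic facts
  have hΔapp : ∀ j, Δ j = β j - βstar j := fun j => rfl
  have hcardT : T'.card = T.card := (Finset.card_sdiff_comm hcards).symm
  have hεrb : ∀ i, ε i = r i + b i := by
    intro i
    have key : b i = (∑ j, x i j * β j) - ∑ j, x i j * βstar j := by
      simp only [hb]
      rw [← Finset.sum_sub_distrib]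
      exact Finset.sum_congr rfl fun j _ => by rw [hΔapp j]; ring
    have hri : r i = y i - ∑ l, x i l * β l := by simp only [hr]
    rw [hε i, key, hri]; ring
  have habsa : ∀ i, |a i| ≤ ‖δ‖ := by
    intro i
    have := abs_sum_le (x i) δ
    rwa [hx i, one_mul] at this
  -- the matching
  have hcardeq : Fintype.card {i // i ∈ T} = Fintype.card {j // j ∈ T'} := by
    rw [Fintype.card_coe, Fintype.card_coe, hcardT]
  set σ : {i // i ∈ T} ≃ {j // j ∈ T'} := Fintype.equivOfCardEq hcardeq with hσ
  have hrle : ∀ i : {i // i ∈ T}, |r i.1| ≤ |r (σ i).1| := by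
    intro i
    have hiS : i.1 ∈ S := (Finset.mem_sdiff.mp i.2).1
    have hjS : (σ i).1 ∉ S := (Finset.mem_sdiff.mp (σ i).2).2
    have h := hsel i.1 hiS (σ i).1 hjS
    have := Real.sqrt_le_sqrt h
    rwa [Real.sqrt_sq_eq_abs, Real.sqrt_sq_eq_abs] at this
  set t : {i // i ∈ T} → ℝ := fun i => r i.1 / r (σ i).1 with ht
  have hrt : ∀ i, r i.1 = t i * r (σ i).1 := by
    intro i
    by_cases h : r (σ i).1 = 0
    · have : |r i.1| ≤ 0 := by rw [← abs_zero (α := ℝ), ← h]; exact hrle i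
      have h2 : r i.1 = 0 := abs_eq_zero.mp (le_antisymm this (abs_nonneg _))
      simp [ht, h, h2]
    · rw [ht]; field_simp
  have htle : ∀ i, |t i| ≤ 1 := by
    intro i
    by_cases h : r (σ i).1 = 0
    · simp [ht, h]
    · rw [ht, abs_div]
      rw [div_le_one (abs_pos.mpr h)]
      exact hrle i
  -- decomposition
  have hdecomp : ∀ i : {i // i ∈ T},
      ε i.1 * a i.1 = t i * ε (σ i).1 * a i.1 - t i * b (σ i).1 * a i.1 + b i.1 * a i.1 := by
    intro i
    have h1 : ε i.1 = t i * (ε (σ i).1 - b (σ i).1) + b i.1 := by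
      rw [hεrb i.1, hrt i]
      have : ε (σ i).1 - b (σ i).1 = r (σ i).1 := by rw [hεrb (σ i).1]; ring
      rw [this]
    rw [h1]; ring
  have hsum : ∑ i ∈ T, ε i * a i
      = (∑ i ∈ T.attach, t i * ε (σ i).1 * a i.1)
        - (∑ i ∈ T.attach, t i * b (σ i).1 * a i.1)
        + ∑ i ∈ T.attach, b i.1 * a i.1 := by
    rw [← Finset.sum_attach T (fun i => ε i * a i), ← Finset.sum_sub_distrib,
      ← Finset.sum_add_distrib]
    exact Finset.sum_congr rfl fun i _ => by rw [hdecomp i]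
  -- bound A
  have hA : ∑ i ∈ T.attach, t i * ε (σ i).1 * a i.1 ≤ (∑ j ∈ T', |ε j|) * ‖δ‖ := by
    have h1 : ∀ i : {i // i ∈ T}, t i * ε (σ i).1 * a i.1 ≤ |ε (σ i).1| * ‖δ‖ := by
      intro i
      calc t i * ε (σ i).1 * a i.1 ≤ |t i * ε (σ i).1 * a i.1| := le_abs_self _
        _ = |t i| * |ε (σ i).1| * |a i.1| := by rw [abs_mul, abs_mul]
        _ ≤ 1 * |ε (σ i).1| * ‖δ‖ := by
            have h2 := htle i
            have h3 := habsa i.1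
            have h4 := abs_nonneg (ε (σ i).1)
            have h5 := abs_nonneg (a i.1)
            have step1 : |t i| * |ε (σ i).1| * |a i.1| ≤ 1 * |ε (σ i).1| * |a i.1| :=
              mul_le_mul_of_nonneg_right (mul_le_mul_of_nonneg_right h2 h4) h5
            have step2 : 1 * |ε (σ i).1| * |a i.1| ≤ 1 * |ε (σ i).1| * ‖δ‖ :=
              mul_le_mul_of_nonneg_left h3 (by positivity)
            linarith
        _ = |ε (σ i).1| * ‖δ‖ := by ring
    calc ∑ i ∈ T.attach, t i * ε (σ i).1 * a i.1 ≤ ∑ i ∈ T.attach, |ε (σ i).1| * ‖δ‖ :=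
          Finset.sum_le_sum fun i _ => h1 i
      _ = (∑ i ∈ T.attach, |ε (σ i).1|) * ‖δ‖ := by rw [Finset.sum_mul]
      _ = (∑ j ∈ T', |ε j|) * ‖δ‖ := by
          congr 1
          rw [← Finset.sum_attach T' (fun j => |ε j|), ← Finset.univ_eq_attach,
            ← Finset.univ_eq_attach]
          exact Equiv.sum_comp σ (fun j => |ε j.1|)
  -- quadratic bounds
  have hsum_a : ∑ i ∈ T.attach, (a i.1) ^ 2 ≤ P * ‖δ‖ ^ 2 := by
    rw [Finset.sum_attach T (fun i => (a i) ^ 2)]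
    exact sum_inner_sq_le x hd T δ
  have hsum_b' : ∑ i ∈ T.attach, (b (σ i).1) ^ 2 ≤ P * ‖Δ‖ ^ 2 := by
    have h1 : ∑ i ∈ T.attach, (b (σ i).1) ^ 2 = ∑ j ∈ T', (b j) ^ 2 := by
      rw [← Finset.sum_attach T' (fun j => (b j) ^ 2), ← Finset.univ_eq_attach,
        ← Finset.univ_eq_attach]
      exact Equiv.sum_comp σ (fun j => (b j.1) ^ 2)
    rw [h1]
    have := sum_inner_sq_le x hd T' Δ
    rwa [hcardT] at this
  have hsum_b : ∑ i ∈ T.attach, (b i.1) ^ 2 ≤ P * ‖Δ‖ ^ 2 := by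
    rw [Finset.sum_attach T (fun i => (b i) ^ 2)]
    exact sum_inner_sq_le x hd T Δ
  have hPnn : 0 ≤ P := by
    rcases le_or_gt 0 P with h | h
    · exact h
    · exfalso
      have h0 : (0:ℝ) ≤ ∑ i ∈ T.attach, (a i.1) ^ 2 := Finset.sum_nonneg fun i _ => sq_nonneg _
      -- P * ‖δ‖^2 could still be nonneg if ‖δ‖ = 0; use psiPlus_nonneg instead
      have hk : T.card ≤ n := by
        calc T.card ≤ Finset.univ.card := Finset.card_le_card (Finset.subset_univ T)
          _ = n := by simp
      exact absurd (psiPlus_nonneg hd x T.card hk) (not_le.mpr h)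
  -- bound B
  have hB : -(∑ i ∈ T.attach, t i * b (σ i).1 * a i.1) ≤ P * ‖Δ‖ * ‖δ‖ := by
    have h1 : -(∑ i ∈ T.attach, t i * b (σ i).1 * a i.1)
        ≤ ∑ i ∈ T.attach, |b (σ i).1| * |a i.1| := by
      rw [← Finset.sum_neg_distrib]
      refine Finset.sum_le_sum fun i _ => ?_
      have h2 := htle i
      have h6 := abs_nonneg (t i)
      have h3 : -(t i * b (σ i).1 * a i.1) ≤ |t i * b (σ i).1 * a i.1| := neg_le_abs _
      have h4 : |t i * b (σ i).1 * a i.1| = |t i| * (|b (σ i).1| * |a i.1|) := by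
        rw [abs_mul, abs_mul]; ring
      have h5 : (0:ℝ) ≤ |b (σ i).1| * |a i.1| := mul_nonneg (abs_nonneg _) (abs_nonneg _)
      nlinarith
    refine h1.trans ?_
    have h7 : ∑ i ∈ T.attach, |b (σ i).1| * |a i.1|
        ≤ Real.sqrt (∑ i ∈ T.attach, (b (σ i).1) ^ 2) * Real.sqrt (∑ i ∈ T.attach, (a i.1) ^ 2) := by
      have := Real.sum_mul_le_sqrt_mul_sqrt T.attach (fun i => |b (σ i).1|) (fun i => |a i.1|)
      simpa [sq_abs] using this
    refine h7.trans ?_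
    exact sqrt_bound (Finset.sum_nonneg fun i _ => sq_nonneg _)
      (Finset.sum_nonneg fun i _ => sq_nonneg _) hPnn (norm_nonneg _) (norm_nonneg _)
      hsum_b' hsum_a
  -- bound C
  have hC : ∑ i ∈ T.attach, b i.1 * a i.1 ≤ P * ‖Δ‖ * ‖δ‖ := by
    have h1 : ∑ i ∈ T.attach, b i.1 * a i.1 ≤ ∑ i ∈ T.attach, |b i.1| * |a i.1| := by
      refine Finset.sum_le_sum fun i _ => ?_
      calc b i.1 * a i.1 ≤ |b i.1 * a i.1| := le_abs_self _
        _ = |b i.1| * |a i.1| := abs_mul _ _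
    refine h1.trans ?_
    have h7 : ∑ i ∈ T.attach, |b i.1| * |a i.1|
        ≤ Real.sqrt (∑ i ∈ T.attach, (b i.1) ^ 2) * Real.sqrt (∑ i ∈ T.attach, (a i.1) ^ 2) := by
      have := Real.sum_mul_le_sqrt_mul_sqrt T.attach (fun i => |b i.1|) (fun i => |a i.1|)
      simpa [sq_abs] using this
    refine h7.trans ?_
    exact sqrt_bound (Finset.sum_nonneg fun i _ => sq_nonneg _)
      (Finset.sum_nonneg fun i _ => sq_nonneg _) hPnn (norm_nonneg _) (norm_nonneg _)
      hsum_b hsum_a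
  calc ∑ i ∈ T, ε i * a i
      = (∑ i ∈ T.attach, t i * ε (σ i).1 * a i.1)
        + (-(∑ i ∈ T.attach, t i * b (σ i).1 * a i.1)
        + ∑ i ∈ T.attach, b i.1 * a i.1) := by rw [hsum]; ring
    _ ≤ (∑ j ∈ T', |ε j|) * ‖δ‖ + (P * ‖Δ‖ * ‖δ‖ + P * ‖Δ‖ * ‖δ‖) :=
        add_le_add hA (add_le_add hB hC)
    _ = (∑ j ∈ T', |ε j|) * ‖δ‖ + 2 * P * ‖Δ‖ * ‖δ‖ := by ring

end main

lemma dot_gram {n d : ℕ} (x : Fin n → EuclideanSpace ℝ (Fin d)) (T : Finset (Fin n))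
    (v : Fin d → ℝ) :
    dotProduct v ((gramMatrix x T).mulVec v) = ∑ i ∈ T, (∑ k, x i k * v k) ^ 2 := by
  simp only [dotProduct, gram_mulVec, Finset.mul_sum]
  rw [Finset.sum_comm]
  refine Finset.sum_congr rfl fun i _ => ?_
  rw [pow_two]
  have h : ∀ j : Fin d, v j * ((∑ k, x i k * v k) * x i j)
      = (∑ k, x i k * v k) * (x i j * v j) := fun j => by ring
  simp only [h]
  rw [← Finset.mul_sum]

theorem stmt14 (n d : ℕ) (x : Fin n → EuclideanSpace ℝ (Fin d))
    (hx : ∀ i, ‖x i‖ = 1)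
    (β βstar : EuclideanSpace ℝ (Fin d)) (y : Fin n → ℝ)
    (ε : Fin n → ℝ) (hε : ∀ i, ε i = y i - ∑ j, x i j * βstar j)
    (m : ℕ) (hm : 1 ≤ m) (hmn : m ≤ n) (hψ : 0 < psiMinus x m)
    (S : Finset (Fin n)) (hScard : S.card = m)
    (hsel : ∀ i ∈ S, ∀ j ∉ S,
      (y i - ∑ l, x i l * β l) ^ 2 ≤ (y j - ∑ l, x j l * β l) ^ 2)
    -- β' = (X_Sᵀ X_S)⁻¹ X_Sᵀ y_S, the least squares estimate on S
    (β' : EuclideanSpace ℝ (Fin d))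
    (hβ' : ∀ j, β' j = (gramMatrix x S)⁻¹.mulVec (fun l => ∑ i ∈ S, y i * x i l) j)
    (Sstar : Finset (Fin n)) (hSstarcard : Sstar.card = m) :
    ‖β' - βstar‖
      ≤ (2 * psiPlus x (S \ Sstar).card / psiMinus x m) * ‖β - βstar‖
        + (∑ i ∈ Sstar, |ε i|) / psiMinus x m := by
  rcases Nat.eq_zero_or_pos d with hd0 | hd
  · subst hd0
    have h0 := psiMinus_dzero x hmn
    rw [h0] at hψ
    exact absurd hψ (lt_irrefl 0)
  classical
  set G := gramMatrix x S with hG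
  set δ : EuclideanSpace ℝ (Fin d) := β' - βstar with hδdef
  have hδapp : ∀ j, δ j = β' j - βstar j := fun _ => rfl
  set P : ℝ := psiPlus x (S \ Sstar).card with hPdef
  have hquadS : ∀ v : EuclideanSpace ℝ (Fin d),
      psiMinus x m * ‖v‖ ^ 2 ≤ ∑ i ∈ S, (∑ j, x i j * v j) ^ 2 := by
    intro v
    have := psiMinus_le_sum_inner_sq x hd S v
    rwa [hScard] at this
  have hGpos : G.PosDef := by
    refine Matrix.posDef_iff_dotProduct_mulVec.mpr ⟨gram_isHermitian x S, ?_⟩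
    intro v hv
    have hstar : star v = v := by simp
    rw [hstar, dot_gram x S v]
    have h1 := hquadS ((WithLp.equiv 2 (Fin d → ℝ)).symm v)
    have h2 : ∑ i ∈ S, (∑ j, x i j * ((WithLp.equiv 2 (Fin d → ℝ)).symm v) j) ^ 2
        = ∑ i ∈ S, (∑ k, x i k * v k) ^ 2 := rfl
    rw [h2] at h1
    have hv0 : ((WithLp.equiv 2 (Fin d → ℝ)).symm v) ≠ 0 := by simpa using hv
    have hn : (0:ℝ) < ‖(WithLp.equiv 2 (Fin d → ℝ)).symm v‖ := norm_pos_iff.mpr hv0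
    calc (0:ℝ) < psiMinus x m * ‖(WithLp.equiv 2 (Fin d → ℝ)).symm v‖ ^ 2 := by positivity
      _ ≤ _ := h1
  have hdet : IsUnit G.det := hGpos.det_pos.ne'.isUnit
  have hGβ' : ∀ j, G.mulVec (fun l => β' l) j = ∑ i ∈ S, y i * x i j := by
    intro j
    have hfun : (fun l => β' l) = (gramMatrix x S)⁻¹.mulVec (fun l => ∑ i ∈ S, y i * x i l) :=
      funext hβ'
    rw [hfun, Matrix.mulVec_mulVec]
    rw [show G * (gramMatrix x S)⁻¹ = 1 from Matrix.mul_nonsing_inv _ hdet, Matrix.one_mulVec]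
  have hGδ : ∀ j, G.mulVec (fun l => δ l) j = ∑ i ∈ S, ε i * x i j := by
    intro j
    have hsub : (fun l => δ l) = (fun l => β' l) - (fun l => βstar l) := by
      funext l; simp [hδapp l]
    rw [hsub, Matrix.mulVec_sub, Pi.sub_apply, hGβ' j]
    have hgs : G.mulVec (fun l => βstar l) j = ∑ i ∈ S, (∑ k, x i k * βstar k) * x i j :=
      gram_mulVec x S (fun l => βstar l) j
    rw [hgs, ← Finset.sum_sub_distrib]
    refine Finset.sum_congr rfl fun i _ => ?_
    rw [hε i]; ring
  have hkey : ∑ i ∈ S, (∑ j, x i j * δ j) ^ 2 = ∑ i ∈ S, ε i * (∑ j, x i j * δ j) := by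
    have h1 : ∑ i ∈ S, (∑ j, x i j * δ j) ^ 2
        = dotProduct (fun l => δ l) (G.mulVec (fun l => δ l)) := by
      rw [dot_gram]
    rw [h1]
    simp only [dotProduct, hGδ]
    simp only [Finset.mul_sum]
    rw [Finset.sum_comm]
    refine Finset.sum_congr rfl fun i _ => ?_
    exact Finset.sum_congr rfl fun j _ => by ring
  have hmain : psiMinus x m * ‖δ‖ ^ 2 ≤ ∑ i ∈ S, ε i * (∑ j, x i j * δ j) := by
    rw [← hkey]; exact hquadS δ
  have hsplit : ∑ i ∈ S, ε i * (∑ j, x i j * δ j)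
      = ∑ i ∈ S ∩ Sstar, ε i * (∑ j, x i j * δ j)
        + ∑ i ∈ S \ Sstar, ε i * (∑ j, x i j * δ j) := by
    have h := Finset.sum_sdiff (f := fun i => ε i * (∑ j, x i j * δ j))
      (Finset.inter_subset_left (s₁ := S) (s₂ := Sstar))
    rw [Finset.sdiff_inter_self_left] at h
    linarith
  have hpart1 : ∑ i ∈ S ∩ Sstar, ε i * (∑ j, x i j * δ j)
      ≤ (∑ i ∈ S ∩ Sstar, |ε i|) * ‖δ‖ := by
    rw [Finset.sum_mul]
    refine Finset.sum_le_sum fun i _ => ?_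
    have h1 : |∑ j, x i j * δ j| ≤ ‖δ‖ := by
      have := abs_sum_le (x i) δ; rwa [hx i, one_mul] at this
    calc ε i * (∑ j, x i j * δ j) ≤ |ε i * (∑ j, x i j * δ j)| := le_abs_self _
      _ = |ε i| * |∑ j, x i j * δ j| := abs_mul _ _
      _ ≤ |ε i| * ‖δ‖ := mul_le_mul_of_nonneg_left h1 (abs_nonneg _)
  have hpart2 := Tpart hd x hx β βstar y ε hε S Sstar (by rw [hScard, hSstarcard]) hsel δ
  have hεtotal : (∑ i ∈ S ∩ Sstar, |ε i|) + (∑ i ∈ Sstar \ S, |ε i|) = ∑ i ∈ Sstar, |ε i| := by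
    have h := Finset.sum_sdiff (f := fun i => |ε i|)
      (Finset.inter_subset_left (s₁ := Sstar) (s₂ := S))
    rw [Finset.sdiff_inter_self_left] at h
    rw [Finset.inter_comm]
    linarith
  have hfinal : psiMinus x m * ‖δ‖ ^ 2
      ≤ (∑ i ∈ Sstar, |ε i|) * ‖δ‖ + 2 * P * ‖β - βstar‖ * ‖δ‖ := by
    have expand : (∑ i ∈ Sstar, |ε i|) * ‖δ‖
        = (∑ i ∈ S ∩ Sstar, |ε i|) * ‖δ‖ + (∑ i ∈ Sstar \ S, |ε i|) * ‖δ‖ := by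
      rw [← hεtotal]; ring
    rw [expand]
    calc psiMinus x m * ‖δ‖ ^ 2 ≤ ∑ i ∈ S, ε i * (∑ j, x i j * δ j) := hmain
      _ = _ + _ := hsplit
      _ ≤ (∑ i ∈ S ∩ Sstar, |ε i|) * ‖δ‖
          + ((∑ i ∈ Sstar \ S, |ε i|) * ‖δ‖ + 2 * P * ‖β - βstar‖ * ‖δ‖) :=
        add_le_add hpart1 hpart2
      _ = _ := by ring
  have hPnn : 0 ≤ P := by
    have hk : (S \ Sstar).card ≤ n := by
      calc (S \ Sstar).card ≤ Finset.univ.card := Finset.card_le_card (Finset.subset_univ _)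
        _ = n := by simp
    exact psiPlus_nonneg hd x _ hk
  rcases eq_or_lt_of_le (norm_nonneg δ) with h0 | hpos
  · rw [← h0]
    have h1 : 0 ≤ 2 * P / psiMinus x m * ‖β - βstar‖ :=
      mul_nonneg (div_nonneg (by linarith) hψ.le) (norm_nonneg _)
    have h2 : 0 ≤ (∑ i ∈ Sstar, |ε i|) / psiMinus x m :=
      div_nonneg (Finset.sum_nonneg fun i _ => abs_nonneg _) hψ.le
    linarith
  · have step : psiMinus x m * ‖δ‖ ≤ (∑ i ∈ Sstar, |ε i|) + 2 * P * ‖β - βstar‖ := by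
      nlinarith [hfinal, hpos]
    rw [div_mul_eq_mul_div, ← add_div, le_div_iff₀ hψ]
    linarith
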